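/- There exists a universal constant c > 0 with the following property. Let S and A be finite nonempty sets, let d₁ be a probability distribution on S, let T ≥ 1 be an integer and β ≥ 0 a real. Let g* : S × A → [0,1] and ĝ^(1),…,ĝ^(T) : S × A → [0,1], and for each t ∈ {1,…,T} let π^(t) assign to each s ∈ S a probability distribution π^(t)(·|s) on A. Assume that for every t ∈ {1,…,T}, ∑_{τ=1}^{t−1} ∑_{s ∈ S} d₁(s) ∑_{a ∈ A} π^(τ)(a|s) · ( ĝ^(t)(s,a) − g*(s,a) )² ≤ β. Then ∑_{t=1}^{T} ∑_{s ∈ S} d₁(s) ∑_{a ∈ A} π^(t)(a|s) · ( ĝ^(t)(s,a) − g*(s,a) )² ≤ c·( √( |A|·T·β·(1+log T) ) + |A| ), where log denotes the natural logarithm. -/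

import Mathlib

lemma cb_tele (L : ℕ → ℝ) : ∀ n : ℕ, ∑ t ∈ Finset.Icc 1 n, (L t - L (t-1)) = L n - L 0 := by
  intro n
  induction n with
  | zero => simp
  | succ k ih =>
      rw [Finset.sum_Icc_succ_top (Nat.le_add_left 1 k), ih,
        show k + 1 - 1 = k by omega]
      ring

lemma cb_swap {S' : Type} [Fintype S'] (T : ℕ) (Q : ℕ → S' → Prop)
    [DecidablePred fun p : ℕ × S' => Q p.1 p.2] [∀ x, DecidablePred fun t => Q t x]
    (F : ℕ → S' → ℝ) :
    ∑ p ∈ (Finset.Icc 1 T ×ˢ Finset.univ).filter (fun p => Q p.1 p.2), F p.1 p.2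
      = ∑ x, ∑ t ∈ (Finset.Icc 1 T).filter (fun t => Q t x), F t x := by
  rw [Finset.sum_filter, Finset.sum_product, Finset.sum_comm]
  exact Finset.sum_congr rfl fun x _ => (Finset.sum_filter _ _).symm

set_option maxHeartbeats 1000000 in
theorem contextual_bandit_offline_to_online :
    ∃ c : ℝ, 0 < c ∧
      ∀ (S A : Type) (_ : Fintype S) (_ : Nonempty S) (_ : Fintype A) (_ : Nonempty A),
      ∀ (d₁ : S → ℝ),
        (∀ s, 0 ≤ d₁ s) → (∑ s, d₁ s = 1) →
      ∀ (T : ℕ), 1 ≤ T → ∀ (β : ℝ), 0 ≤ β →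
      ∀ (gstar : S → A → ℝ), (∀ s a, gstar s a ∈ Set.Icc (0 : ℝ) 1) →
      ∀ (ghat : ℕ → S → A → ℝ),
        (∀ t ∈ Finset.Icc 1 T, ∀ s a, ghat t s a ∈ Set.Icc (0 : ℝ) 1) →
      ∀ (π : ℕ → S → A → ℝ),
        (∀ t ∈ Finset.Icc 1 T, ∀ s, (∀ a, 0 ≤ π t s a) ∧ ∑ a, π t s a = 1) →
        (∀ t ∈ Finset.Icc 1 T,
          ∑ τ ∈ Finset.Icc 1 (t - 1), ∑ s, d₁ s * ∑ a, π τ s a * (ghat t s a - gstar s a) ^ 2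
            ≤ β) →
        ∑ t ∈ Finset.Icc 1 T, ∑ s, d₁ s * ∑ a, π t s a * (ghat t s a - gstar s a) ^ 2
          ≤ c * (Real.sqrt ((Fintype.card A) * T * β * (1 + Real.log T)) + Fintype.card A) := by
  refine ⟨2, by norm_num, ?_⟩
  intro S A _ _ _ _ d₁ hd₁0 hd₁1 T hT β hβ0 gstar hg ghat hgh π hπ hoff
  classical
  set AT : ℝ := (Fintype.card A : ℝ) with hAT
  have hAT0 : 0 ≤ AT := by positivity
  set δ : ℕ → S × A → ℝ := fun t x => ghat t x.1 x.2 - gstar x.1 x.2 with hδdef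
  set d : ℕ → S × A → ℝ := fun t x => d₁ x.1 * π t x.1 x.2 with hddef
  set μ : S × A → ℝ := fun x => d₁ x.1 with hμdef
  set D : ℕ → S × A → ℝ := fun t x => ∑ τ ∈ Finset.Icc 1 t, d τ x with hDdef
  have hμ0 : ∀ x, 0 ≤ μ x := fun x => hd₁0 x.1
  have hπ1 : ∀ t ∈ Finset.Icc 1 T, ∀ s a, π t s a ≤ 1 := by
    intro t ht s a
    have h := hπ t ht s
    calc π t s a ≤ ∑ a, π t s a :=
          Finset.single_le_sum (fun a _ => h.1 a) (Finset.mem_univ a)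
      _ = 1 := h.2
  have hd0 : ∀ t ∈ Finset.Icc 1 T, ∀ x, 0 ≤ d t x :=
    fun t ht x => mul_nonneg (hd₁0 x.1) ((hπ t ht x.1).1 x.2)
  have hdμ : ∀ t ∈ Finset.Icc 1 T, ∀ x, d t x ≤ μ x := by
    intro t ht x
    simpa using mul_le_of_le_one_right (hd₁0 x.1) (hπ1 t ht x.1 x.2)
  have hδsq : ∀ t ∈ Finset.Icc 1 T, ∀ x, δ t x ^ 2 ≤ 1 := by
    intro t ht x
    have h1 := hg x.1 x.2
    have h2 := hgh t ht x.1 x.2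
    simp only [Set.mem_Icc] at h1 h2
    simp only [hδdef]
    nlinarith [h1.1, h1.2, h2.1, h2.2]
  have hδ0 : ∀ t x, 0 ≤ δ t x ^ 2 := fun t x => sq_nonneg _
  have hD0 : ∀ t, t ≤ T → ∀ x, 0 ≤ D t x := by
    intro t htT x
    refine Finset.sum_nonneg fun τ hτ => hd0 τ ?_ x
    simp only [Finset.mem_Icc] at hτ ⊢
    exact ⟨hτ.1, hτ.2.trans htT⟩
  have hDmono : ∀ x, ∀ s t : ℕ, s ≤ t → t ≤ T → D s x ≤ D t x := by
    intro x s t hst htT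
    refine Finset.sum_le_sum_of_subset_of_nonneg
      (Finset.Icc_subset_Icc_right hst) (fun τ hτ _ => ?_)
    refine hd0 τ ?_ x
    simp only [Finset.mem_Icc] at hτ ⊢
    exact ⟨hτ.1, hτ.2.trans htT⟩
  have hDsucc : ∀ t, 1 ≤ t → ∀ x, D t x = D (t - 1) x + d t x := by
    intro t ht x
    obtain ⟨k, rfl⟩ : ∃ k, t = k + 1 := ⟨t - 1, (Nat.succ_pred_eq_of_pos ht).symm⟩
    simp only [hDdef, Nat.add_sub_cancel]
    exact Finset.sum_Icc_succ_top (Nat.le_add_left 1 k) _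
  have hDTle : ∀ x, D T x ≤ T * μ x := by
    intro x
    calc D T x ≤ ∑ τ ∈ Finset.Icc 1 T, μ x :=
          Finset.sum_le_sum fun τ hτ => hdμ τ hτ x
      _ = T * μ x := by
          rw [Finset.sum_const, Nat.card_Icc]
          simp [nsmul_eq_mul]
  -- rewrite of the double sum
  have hsum : ∀ t t' : ℕ,
      ∑ s, d₁ s * ∑ a, π t' s a * (ghat t s a - gstar s a) ^ 2
        = ∑ x : S × A, d t' x * δ t x ^ 2 := by
    intro t t'
    rw [Fintype.sum_prod_type]
    refine Finset.sum_congr rfl fun s _ => ?_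
    rw [Finset.mul_sum]
    exact Finset.sum_congr rfl fun a _ => by simp only [hddef, hδdef]; ring
  have hoff' : ∀ t ∈ Finset.Icc 1 T, ∑ x : S × A, D (t - 1) x * δ t x ^ 2 ≤ β := by
    intro t ht
    have : ∑ x : S × A, D (t - 1) x * δ t x ^ 2
        = ∑ τ ∈ Finset.Icc 1 (t - 1), ∑ s, d₁ s * ∑ a, π τ s a * (ghat t s a - gstar s a) ^ 2 := by
      simp only [hsum]
      rw [Finset.sum_comm]
      exact Finset.sum_congr rfl fun x _ => by rw [hDdef, Finset.sum_mul]
    rw [this]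
    exact hoff t ht
  have hlogT0 : (0:ℝ) ≤ Real.log T := Real.log_nonneg (by exact_mod_cast hT)
  set z : ℝ := AT * T * β * (1 + Real.log T) with hz
  have hz0 : 0 ≤ z := by positivity
  set P : Finset (ℕ × (S × A)) := Finset.Icc 1 T ×ˢ Finset.univ with hP
  set Q : ℕ → S × A → Prop := fun t x => D t x ≤ 2 * μ x with hQ
  have hLHS : ∑ t ∈ Finset.Icc 1 T, ∑ s, d₁ s * ∑ a, π t s a * (ghat t s a - gstar s a) ^ 2
      = ∑ p ∈ P, d p.1 p.2 * δ p.1 p.2 ^ 2 := by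
    rw [hP, Finset.sum_product]
    exact Finset.sum_congr rfl fun t _ => hsum t t
  rw [hLHS, ← Finset.sum_filter_add_sum_filter_not P (fun p => Q p.1 p.2)]
  have hμsum : ∑ x : S × A, μ x = AT := by
    rw [Fintype.sum_prod_type]
    have h1 : ∀ s : S, ∑ _a : A, μ (s, _a) = AT * d₁ s := fun s => by
      simp only [hμdef]
      rw [Finset.sum_const]; simp [hAT, nsmul_eq_mul, mul_comm]
    simp only [h1]
    rw [← Finset.mul_sum, hd₁1, mul_one]
  have hburn : ∀ x, ∑ t ∈ (Finset.Icc 1 T).filter (fun t => Q t x), d t x ≤ 2 * μ x := by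
    intro x
    set B := (Finset.Icc 1 T).filter (fun t => Q t x) with hB
    rcases B.eq_empty_or_nonempty with h | h
    · rw [h, Finset.sum_empty]; linarith [hμ0 x]
    · set m := B.max' h with hm
      have hmB : m ∈ B := B.max'_mem h
      have hmIcc : m ∈ Finset.Icc 1 T := (Finset.mem_filter.1 hmB).1
      have hmQ : D m x ≤ 2 * μ x := (Finset.mem_filter.1 hmB).2
      have hsub : B ⊆ Finset.Icc 1 m := by
        intro t htB
        have h1 := (Finset.mem_filter.1 htB).1
        simp only [Finset.mem_Icc] at h1 ⊢
        exact ⟨h1.1, Finset.le_max' _ _ htB⟩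
      calc ∑ t ∈ B, d t x ≤ ∑ t ∈ Finset.Icc 1 m, d t x := by
            refine Finset.sum_le_sum_of_subset_of_nonneg hsub fun t ht _ => ?_
            refine hd0 t ?_ x
            simp only [Finset.mem_Icc] at ht ⊢
            exact ⟨ht.1, ht.2.trans (Finset.mem_Icc.1 hmIcc).2⟩
        _ = D m x := rfl
        _ ≤ 2 * μ x := hmQ
  have hpart1 : ∑ p ∈ P.filter (fun p => Q p.1 p.2), d p.1 p.2 * δ p.1 p.2 ^ 2 ≤ 2 * AT := by
    have h1 : ∑ p ∈ P.filter (fun p => Q p.1 p.2), d p.1 p.2 * δ p.1 p.2 ^ 2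
        ≤ ∑ p ∈ P.filter (fun p => Q p.1 p.2), d p.1 p.2 := by
      refine Finset.sum_le_sum fun p hp => ?_
      have hp1 : p.1 ∈ Finset.Icc 1 T := (Finset.mem_product.1 (Finset.filter_subset _ _ hp)).1
      have := hd0 p.1 hp1 p.2
      nlinarith [hδsq p.1 hp1 p.2]
    calc ∑ p ∈ P.filter (fun p => Q p.1 p.2), d p.1 p.2 * δ p.1 p.2 ^ 2
        ≤ ∑ p ∈ P.filter (fun p => Q p.1 p.2), d p.1 p.2 := h1
      _ = ∑ x, ∑ t ∈ (Finset.Icc 1 T).filter (fun t => Q t x), d t x := cb_swap T Q d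
      _ ≤ ∑ x : S × A, 2 * μ x := Finset.sum_le_sum fun x _ => hburn x
      _ = 2 * AT := by rw [← Finset.mul_sum, hμsum]
  have hkey : ∀ t ∈ Finset.Icc 1 T, ∀ x, ¬ Q t x →
      0 < μ x ∧ μ x ≤ D (t-1) x ∧ D t x / 2 < D (t-1) x ∧ 0 < D t x := by
    intro t ht x hQx
    simp only [hQ, not_le] at hQx
    have hμpos : 0 < μ x := by
      by_contra hc
      push_neg at hc
      have hμz : μ x = 0 := le_antisymm hc (hμ0 x)
      have hDz : D t x = 0 := by
        rw [hDdef]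
        refine Finset.sum_eq_zero fun τ hτ => ?_
        have hτ' : τ ∈ Finset.Icc 1 T := by
          simp only [Finset.mem_Icc] at hτ ⊢
          exact ⟨hτ.1, hτ.2.trans (Finset.mem_Icc.1 ht).2⟩
        exact le_antisymm (by rw [← hμz]; exact hdμ τ hτ' x) (hd0 τ hτ' x)
      rw [hDz, hμz] at hQx; linarith
    have ht1 : 1 ≤ t := (Finset.mem_Icc.1 ht).1
    have hDs := hDsucc t ht1 x
    have hdle := hdμ t ht x
    have hd0' := hd0 t ht x
    exact ⟨hμpos, by linarith, by linarith, by linarith⟩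
  have hpart2 : ∑ p ∈ P.filter (fun p => ¬ Q p.1 p.2), d p.1 p.2 * δ p.1 p.2 ^ 2
      ≤ 2 * Real.sqrt z := by
    set f : ℕ × (S × A) → ℝ := fun p => d p.1 p.2 / Real.sqrt (D (p.1 - 1) p.2) with hf
    set g : ℕ × (S × A) → ℝ := fun p => Real.sqrt (D (p.1 - 1) p.2) * δ p.1 p.2 ^ 2 with hgdef
    set P2 := P.filter (fun p => ¬ Q p.1 p.2) with hP2
    have hmem : ∀ p ∈ P2, p.1 ∈ Finset.Icc 1 T ∧ ¬ Q p.1 p.2 := by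
      intro p hp
      rw [hP2, Finset.mem_filter] at hp
      exact ⟨(Finset.mem_product.1 hp.1).1, hp.2⟩
    have hfg : ∀ p ∈ P2, d p.1 p.2 * δ p.1 p.2 ^ 2 = f p * g p := by
      intro p hp
      obtain ⟨hp1, hp2⟩ := hmem p hp
      obtain ⟨hμp, hμD, -, -⟩ := hkey p.1 hp1 p.2 hp2
      have hDpos : 0 < D (p.1 - 1) p.2 := lt_of_lt_of_le hμp hμD
      have hs : Real.sqrt (D (p.1 - 1) p.2) ≠ 0 := ne_of_gt (Real.sqrt_pos.2 hDpos)
      simp only [hf, hgdef]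
      field_simp
    -- per-context log bound
    have hlog : ∀ x, ∑ t ∈ (Finset.Icc 1 T).filter (fun t => ¬ Q t x), d t x / D t x
        ≤ Real.log T := by
      intro x
      set G := (Finset.Icc 1 T).filter (fun t => ¬ Q t x) with hG
      rcases G.eq_empty_or_nonempty with h | h
      · rw [h, Finset.sum_empty]; exact hlogT0
      obtain ⟨t₀, ht₀⟩ := h
      have ht₀' := Finset.mem_filter.1 ht₀
      obtain ⟨hμpos, -, -, -⟩ := hkey t₀ ht₀'.1 x ht₀'.2
      set L : ℕ → ℝ := fun t => Real.log (max (D t x) (μ x)) with hL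
      have hmaxpos : ∀ t, 0 < max (D t x) (μ x) :=
        fun t => lt_of_lt_of_le hμpos (le_max_right _ _)
      have hLmono : ∀ t ∈ Finset.Icc 1 T, L (t - 1) ≤ L t := by
        intro t ht
        have htm := Finset.mem_Icc.1 ht
        exact Real.log_le_log (hmaxpos _)
          (max_le_max (hDmono x (t-1) t (Nat.sub_le t 1) htm.2) le_rfl)
      have hkey2 : ∀ t ∈ G, d t x / D t x ≤ L t - L (t - 1) := by
        intro t ht
        have ht' := Finset.mem_filter.1 ht
        obtain ⟨-, hμD, -, hDpos⟩ := hkey t ht'.1 x ht'.2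
        have hD1pos : 0 < D (t-1) x := lt_of_lt_of_le hμpos hμD
        have hDle : D (t-1) x ≤ D t x :=
          hDmono x (t-1) t (Nat.sub_le t 1) (Finset.mem_Icc.1 ht'.1).2
        have hLt : L t = Real.log (D t x) := by
          simp only [hL]; rw [max_eq_left (le_trans hμD hDle)]
        have hLt1 : L (t-1) = Real.log (D (t-1) x) := by
          simp only [hL]; rw [max_eq_left hμD]
        rw [hLt, hLt1]
        have hlog1 : Real.log (D (t-1) x / D t x) ≤ D (t-1) x / D t x - 1 :=
          Real.log_le_sub_one_of_pos (div_pos hD1pos hDpos)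
        rw [Real.log_div (ne_of_gt hD1pos) (ne_of_gt hDpos)] at hlog1
        have hdd : d t x / D t x + D (t-1) x / D t x = 1 := by
          rw [← add_div,
            show d t x + D (t-1) x = D t x by
              linarith [hDsucc t (Finset.mem_Icc.1 ht'.1).1 x]]
          exact div_self (ne_of_gt hDpos)
        linarith
      calc ∑ t ∈ G, d t x / D t x ≤ ∑ t ∈ G, (L t - L (t-1)) := Finset.sum_le_sum hkey2
        _ ≤ ∑ t ∈ Finset.Icc 1 T, (L t - L (t-1)) := by
            rw [hG]
            refine Finset.sum_le_sum_of_subset_of_nonneg (Finset.filter_subset _ _)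
              fun t ht _ => ?_
            linarith [hLmono t ht]
        _ = L T - L 0 := cb_tele L T
        _ ≤ Real.log T := by
            have hD0x : D 0 x = 0 := by simp [hDdef]
            have hL0 : L 0 = Real.log (μ x) := by
              simp only [hL]; rw [hD0x, max_eq_right (hμ0 x)]
            have hLT : L T ≤ Real.log (T * μ x) := by
              refine Real.log_le_log (hmaxpos T) (max_le (hDTle x) ?_)
              exact le_mul_of_one_le_left (hμ0 x) (by exact_mod_cast hT)
            have hTne : (T:ℝ) ≠ 0 := by positivity
            rw [Real.log_mul hTne (ne_of_gt hμpos)] at hLT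
            rw [hL0]
            linarith
    -- bound on ∑ f²
    have hf2 : ∑ p ∈ P2, f p ^ 2 ≤ 2 * AT * (1 + Real.log T) := by
      have hperx : ∀ x, ∑ t ∈ (Finset.Icc 1 T).filter (fun t => ¬ Q t x),
          (d t x / Real.sqrt (D (t-1) x)) ^ 2 ≤ 2 * μ x * Real.log T := by
        intro x
        have hstep : ∀ t ∈ (Finset.Icc 1 T).filter (fun t => ¬ Q t x),
            (d t x / Real.sqrt (D (t-1) x)) ^ 2 ≤ 2 * μ x * (d t x / D t x) := by
          intro t ht
          have ht' := Finset.mem_filter.1 ht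
          obtain ⟨hμp, hμD, hhalf, hDpos⟩ := hkey t ht'.1 x ht'.2
          have hD1pos : 0 < D (t-1) x := lt_of_lt_of_le hμp hμD
          have hd0' := hd0 t ht'.1 x
          have hdμ' := hdμ t ht'.1 x
          rw [div_pow, Real.sq_sqrt (le_of_lt hD1pos), div_le_iff₀ hD1pos]
          have h3 : 2 * μ x * (d t x / D t x) * (D t x / 2) = μ x * d t x := by
            field_simp
          have hnn : 0 ≤ 2 * μ x * (d t x / D t x) := by positivity
          nlinarith [mul_le_mul_of_nonneg_left (le_of_lt hhalf) hnn]
        calc ∑ t ∈ (Finset.Icc 1 T).filter (fun t => ¬ Q t x),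
              (d t x / Real.sqrt (D (t-1) x)) ^ 2
            ≤ ∑ t ∈ (Finset.Icc 1 T).filter (fun t => ¬ Q t x),
              2 * μ x * (d t x / D t x) := Finset.sum_le_sum hstep
          _ = 2 * μ x * ∑ t ∈ (Finset.Icc 1 T).filter (fun t => ¬ Q t x),
              d t x / D t x := by rw [Finset.mul_sum]
          _ ≤ 2 * μ x * Real.log T := by
              have := mul_le_mul_of_nonneg_left (hlog x)
                (mul_nonneg (by norm_num) (hμ0 x) : (0:ℝ) ≤ 2 * μ x)
              linarith
      calc ∑ p ∈ P2, f p ^ 2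
          = ∑ x, ∑ t ∈ (Finset.Icc 1 T).filter (fun t => ¬ Q t x),
            (d t x / Real.sqrt (D (t-1) x)) ^ 2 := by
            rw [hP2]
            exact cb_swap T (fun t x => ¬ Q t x)
              (fun t x => (d t x / Real.sqrt (D (t-1) x)) ^ 2)
        _ ≤ ∑ x : S × A, 2 * μ x * Real.log T := Finset.sum_le_sum fun x _ => hperx x
        _ = 2 * Real.log T * AT := by
            have he : ∀ x : S × A, 2 * μ x * Real.log T = 2 * Real.log T * μ x :=
              fun x => by ring
            simp only [he]
            rw [← Finset.mul_sum, hμsum]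
        _ ≤ 2 * AT * (1 + Real.log T) := by nlinarith
    -- bound on ∑ g²
    have hg2 : ∑ p ∈ P2, g p ^ 2 ≤ T * β := by
      have hle : ∀ p ∈ P2, g p ^ 2 ≤ D (p.1-1) p.2 * δ p.1 p.2 ^ 2 := by
        intro p hp
        obtain ⟨hp1, -⟩ := hmem p hp
        have hD1 : 0 ≤ D (p.1-1) p.2 :=
          hD0 _ (le_trans (Nat.sub_le _ _) (Finset.mem_Icc.1 hp1).2) p.2
        have hgp : g p ^ 2 = D (p.1-1) p.2 * (δ p.1 p.2 ^ 2) ^ 2 := by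
          simp only [hgdef]
          rw [mul_pow, Real.sq_sqrt hD1]
        rw [hgp]
        have hδ1 := hδsq p.1 hp1 p.2
        have hq : (δ p.1 p.2 ^ 2) ^ 2 ≤ δ p.1 p.2 ^ 2 := by
          nlinarith [hδ0 p.1 p.2]
        exact mul_le_mul_of_nonneg_left hq hD1
      calc ∑ p ∈ P2, g p ^ 2
          ≤ ∑ p ∈ P2, D (p.1-1) p.2 * δ p.1 p.2 ^ 2 := Finset.sum_le_sum hle
        _ ≤ ∑ p ∈ P, D (p.1-1) p.2 * δ p.1 p.2 ^ 2 := by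
            rw [hP2]
            refine Finset.sum_le_sum_of_subset_of_nonneg (Finset.filter_subset _ _)
              fun p hp _ => ?_
            have hp1 : p.1 ∈ Finset.Icc 1 T := (Finset.mem_product.1 hp).1
            have hD1 : 0 ≤ D (p.1-1) p.2 :=
              hD0 _ (le_trans (Nat.sub_le _ _) (Finset.mem_Icc.1 hp1).2) p.2
            exact mul_nonneg hD1 (hδ0 _ _)
        _ = ∑ t ∈ Finset.Icc 1 T, ∑ x : S × A, D (t-1) x * δ t x ^ 2 := by
            rw [hP, Finset.sum_product]
        _ ≤ ∑ t ∈ Finset.Icc 1 T, β := Finset.sum_le_sum fun t ht => hoff' t ht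
        _ = T * β := by
            rw [Finset.sum_const, Nat.card_Icc]
            simp [nsmul_eq_mul]
    -- Cauchy–Schwarz
    have hcs := Finset.sum_mul_sq_le_sq_mul_sq P2 f g
    have hfgsum : ∑ p ∈ P2, d p.1 p.2 * δ p.1 p.2 ^ 2 = ∑ p ∈ P2, f p * g p :=
      Finset.sum_congr rfl hfg
    have hS0 : 0 ≤ ∑ p ∈ P2, d p.1 p.2 * δ p.1 p.2 ^ 2 :=
      Finset.sum_nonneg fun p hp => mul_nonneg (hd0 p.1 (hmem p hp).1 p.2) (hδ0 _ _)
    have hg2nn : 0 ≤ ∑ p ∈ P2, g p ^ 2 := Finset.sum_nonneg fun p _ => sq_nonneg _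
    have hbnn : (0:ℝ) ≤ 2 * AT * (1 + Real.log T) := by positivity
    have hsq : (∑ p ∈ P2, d p.1 p.2 * δ p.1 p.2 ^ 2) ^ 2
        ≤ (2 * AT * (1 + Real.log T)) * (T * β) := by
      rw [hfgsum]
      calc (∑ p ∈ P2, f p * g p) ^ 2
          ≤ (∑ p ∈ P2, f p ^ 2) * (∑ p ∈ P2, g p ^ 2) := hcs
        _ ≤ (2 * AT * (1 + Real.log T)) * (T * β) :=
            mul_le_mul hf2 hg2 hg2nn hbnn
    have h2z : (2 * AT * (1 + Real.log T)) * (T * β) = 2 * z := by rw [hz]; ring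
    have hs4 : (∑ p ∈ P2, d p.1 p.2 * δ p.1 p.2 ^ 2) ^ 2 ≤ 2 ^ 2 * z := by
      rw [h2z] at hsq
      have h42 : (2:ℝ) ^ 2 * z = 4 * z := by norm_num
      linarith
    have hfin := Real.sqrt_le_sqrt hs4
    rw [Real.sqrt_sq hS0, Real.sqrt_mul (by norm_num : (0:ℝ) ≤ 2^2) z,
      Real.sqrt_sq (by norm_num : (0:ℝ) ≤ 2)] at hfin
    exact hfin
  linarith
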